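/- For any θ ∈ ℝ and f₁ ∈ ℝ, f₂ > 0, Polson's integral identity holds: e^{f₁θ} / (1 + e^{θ})^{f₂} = 2^{-f₂} e^{κθ} ∫₀^∞ e^{-ω θ²/2} p_{PG(f₂,0)}(ω) dω, where κ = f₁ − f₂/2 and p_{PG(f₂,0)} is the density of the Pólya–Gamma distribution PG(f₂,0); equivalently, cosh^{-f₂}(θ/2) = 𝔼_{ω∼PG(f₂,0)}[e^{-ωθ²/2}]. -/

import Mathlib

open MeasureTheory ProbabilityTheory Real Filter Set
open scoped ENNReal NNReal

private lemma prod_range_two_mul (f : ℕ → ℂ) (n : ℕ) :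
    ∏ j ∈ Finset.range (2 * n), f j =
      (∏ j ∈ Finset.range n, f (2 * j)) * ∏ j ∈ Finset.range n, f (2 * j + 1) := by
  induction n with
  | zero => simp
  | succ n ih =>
    have h : 2 * (n + 1) = 2 * n + 1 + 1 := by ring
    rw [h, Finset.prod_range_succ, Finset.prod_range_succ, Finset.prod_range_succ,
      Finset.prod_range_succ, ih]
    ring

private lemma tendsto_cosh_prod (t : ℝ) :
    Filter.Tendsto (fun n : ℕ => ∏ j ∈ Finset.range n,
        (1 + t ^ 2 / (((j : ℝ) + 1 / 2) ^ 2 * π ^ 2)))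
      Filter.atTop (nhds (Real.cosh t)) := by
  rcases eq_or_ne t 0 with rfl | ht
  · simp only [ne_eq, OfNat.ofNat_ne_zero, not_false_eq_true, zero_pow, zero_div, add_zero,
      Finset.prod_const_one, Real.cosh_zero]
    exact tendsto_const_nhds
  have hπ : (π : ℂ) ≠ 0 := Complex.ofReal_ne_zero.mpr Real.pi_ne_zero
  set z : ℂ := Complex.I * t / π with hz
  have hπz : π * z = Complex.I * t := by rw [hz, mul_comm, div_mul_cancel₀ _ hπ]
  have hz2 : z ^ 2 = -((t : ℂ) ^ 2 / (π : ℂ) ^ 2) := by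
    rw [hz, div_pow, mul_pow, Complex.I_sq]; ring
  -- even factors are the z-factors, with real value
  have hfac2 : ∀ j : ℕ, (1 : ℂ) - z ^ 2 / ((j : ℂ) + 1) ^ 2
      = ((1 + (t / π) ^ 2 / ((j : ℝ) + 1) ^ 2 : ℝ) : ℂ) := by
    intro j
    have hj : ((j : ℂ) + 1) ≠ 0 := by
      exact_mod_cast Nat.cast_add_one_ne_zero (R := ℂ) j
    rw [hz2]
    push_cast
    field_simp
    ring
  have hfac : ∀ j : ℕ, (1 : ℂ) - (2 * z) ^ 2 / (2 * (j : ℂ) + 1) ^ 2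
      = ((1 + t ^ 2 / (((j : ℝ) + 1 / 2) ^ 2 * π ^ 2) : ℝ) : ℂ) := by
    intro j
    have hj : (2 * (j : ℂ) + 1) ≠ 0 := by
      have : ((2 * j + 1 : ℕ) : ℂ) ≠ 0 := Nat.cast_ne_zero.mpr (by omega)
      push_cast at this; convert this using 2
    have hjr : ((j : ℝ) + 1 / 2) ≠ 0 := by positivity
    have h4 : (2 * z) ^ 2 = 4 * z ^ 2 := by ring
    rw [h4, hz2]
    push_cast
    have e1 : (2 * (j : ℂ) + 1) ^ 2 = 4 * ((j : ℂ) + 1 / 2) ^ 2 := by ring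
    have e2 : (4 : ℂ) * -((t : ℂ) ^ 2 / (π : ℂ) ^ 2) / (4 * ((j : ℂ) + 1 / 2) ^ 2)
        = -((t : ℂ) ^ 2 / (((j : ℂ) + 1 / 2) ^ 2 * (π : ℂ) ^ 2)) := by
      rw [mul_div_mul_left _ _ (by norm_num : (4 : ℂ) ≠ 0), neg_div, div_div, mul_comm]
    rw [e1, e2, sub_neg_eq_add]
  set A : ℕ → ℂ := fun n => π * z * ∏ j ∈ Finset.range n, (1 - z ^ 2 / ((j : ℂ) + 1) ^ 2) with hA
  set C : ℕ → ℂ := fun n => ∏ j ∈ Finset.range n,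
      (1 - (2 * z) ^ 2 / (2 * (j : ℂ) + 1) ^ 2) with hC
  have hAtend : Tendsto A atTop (nhds (Complex.sin (π * z))) :=
    Complex.tendsto_euler_sin_prod z
  have hAne : ∀ n, 2 * A n ≠ 0 := by
    intro n
    have h1 : (π : ℂ) * z ≠ 0 := by
      rw [hπz]
      exact mul_ne_zero Complex.I_ne_zero (Complex.ofReal_ne_zero.mpr ht)
    refine mul_ne_zero two_ne_zero (mul_ne_zero h1 ?_)
    rw [Finset.prod_ne_zero_iff]
    intro j _
    rw [hfac2 j]
    have : (0 : ℝ) < 1 + (t / π) ^ 2 / ((j : ℝ) + 1) ^ 2 := by positivity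
    exact_mod_cast this.ne'
  have hsinne : (2 : ℂ) * Complex.sin (π * z) ≠ 0 := by
    rw [hπz, mul_comm Complex.I (t : ℂ), Complex.sin_mul_I]
    refine mul_ne_zero two_ne_zero (mul_ne_zero ?_ Complex.I_ne_zero)
    rw [← Complex.ofReal_sinh, Complex.ofReal_ne_zero]
    exact fun h => ht (Real.sinh_eq_zero.mp h)
  -- doubling
  have hdouble : Tendsto (fun n : ℕ => 2 * n) atTop atTop :=
    Filter.tendsto_atTop_atTop.mpr fun b => ⟨b, fun a ha => by omega⟩
  have hoddfac : ∀ j : ℕ, (1 : ℂ) - (2 * z) ^ 2 / (((2 * j + 1 : ℕ) : ℂ) + 1) ^ 2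
      = 1 - z ^ 2 / ((j : ℂ) + 1) ^ 2 := by
    intro j
    push_cast
    have h1 : ((2 : ℂ) * j + 1 + 1) ^ 2 = 4 * ((j : ℂ) + 1) ^ 2 := by ring
    have h2 : (2 * z) ^ 2 = 4 * z ^ 2 := by ring
    rw [h1, h2, mul_div_mul_left _ _ (by norm_num : (4 : ℂ) ≠ 0)]
  have hsplit : ∀ n : ℕ, π * (2 * z) *
      ∏ j ∈ Finset.range (2 * n), (1 - (2 * z) ^ 2 / ((j : ℂ) + 1) ^ 2)
      = 2 * A n * C n := by
    intro n
    rw [prod_range_two_mul (fun j => 1 - (2 * z) ^ 2 / ((j : ℂ) + 1) ^ 2) n]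
    have he : ∀ j : ℕ, (1 : ℂ) - (2 * z) ^ 2 / (((2 * j : ℕ) : ℂ) + 1) ^ 2
        = 1 - (2 * z) ^ 2 / (2 * (j : ℂ) + 1) ^ 2 := by intro j; push_cast; ring_nf
    rw [Finset.prod_congr rfl (fun j _ => he j), Finset.prod_congr rfl (fun j _ => hoddfac j),
      hA, hC]
    ring
  have hA2 : Tendsto (fun n : ℕ => 2 * A n * C n) atTop
      (nhds (Complex.sin (π * (2 * z)))) := by
    have := (Complex.tendsto_euler_sin_prod (2 * z)).comp hdouble
    refine this.congr fun n => ?_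
    exact hsplit n
  have hCt : Tendsto C atTop (nhds (Complex.sin (π * (2 * z)) / (2 * Complex.sin (π * z)))) := by
    have hdiv := hA2.div (hAtend.const_mul 2) hsinne
    refine hdiv.congr fun n => ?_
    show 2 * A n * C n / (2 * A n) = C n
    rw [mul_comm (2 * A n) (C n), mul_div_assoc, div_self (hAne n), mul_one]
  have hlim : Complex.sin (π * (2 * z)) / (2 * Complex.sin (π * z))
      = ((Real.cosh t : ℝ) : ℂ) := by
    have h2 : (π : ℂ) * (2 * z) = 2 * (π * z) := by ring
    rw [h2, Complex.sin_two_mul,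
      mul_comm (2 * Complex.sin (π * z)) (Complex.cos (π * z)), mul_div_assoc,
      div_self hsinne, mul_one, hπz, mul_comm Complex.I (t : ℂ), Complex.cos_mul_I,
      Complex.ofReal_cosh]
  rw [hlim] at hCt
  have hCreal : ∀ n, C n = ((∏ j ∈ Finset.range n,
      (1 + t ^ 2 / (((j : ℝ) + 1 / 2) ^ 2 * π ^ 2)) : ℝ) : ℂ) := by
    intro n
    rw [hC, Complex.ofReal_prod]
    exact Finset.prod_congr rfl fun j _ => hfac j
  have hre := (Complex.continuous_re.tendsto _).comp hCt
  rw [Complex.ofReal_re] at hre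
  exact hre.congr fun n => by rw [Function.comp_apply, hCreal n, Complex.ofReal_re]


private lemma gamma_laplace (f₂ : ℝ) (hf₂ : 0 < f₂) {u : ℝ} (hu : u ≤ 0) :
    ∫ y, Real.exp (u * y) ∂(gammaMeasure f₂ 1) = (1 - u) ^ (-f₂) := by
  have h1u : (0 : ℝ) < 1 - u := by linarith
  have hΓ : 0 < Real.Gamma f₂ := Real.Gamma_pos_of_pos hf₂
  rw [gammaMeasure]
  have hpdf : gammaPDF f₂ 1 = fun x => ((Real.toNNReal (gammaPDFReal f₂ 1 x) : ℝ≥0) : ℝ≥0∞) :=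
    rfl
  rw [hpdf, integral_withDensity_eq_integral_smul (measurable_gammaPDFReal f₂ 1).real_toNNReal]
  have hint : ∀ x : ℝ, (Real.toNNReal (gammaPDFReal f₂ 1 x) : ℝ≥0) • Real.exp (u * x)
      = gammaPDFReal f₂ 1 x * Real.exp (u * x) := by
    intro x
    rw [NNReal.smul_def, smul_eq_mul, Real.coe_toNNReal _ (gammaPDFReal_nonneg hf₂ one_pos x)]
  simp_rw [hint]
  rw [← setIntegral_eq_integral_of_forall_compl_eq_zero
    (s := Ici (0:ℝ)) (fun x hx => by
      simp [gammaPDFReal, if_neg (by simpa using hx : ¬ (0:ℝ) ≤ x)]),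
    integral_Ici_eq_integral_Ioi]
  rw [setIntegral_congr_fun measurableSet_Ioi (g := fun x =>
      (1 / Real.Gamma f₂) * (x ^ (f₂ - 1) * Real.exp (-((1 - u) * x)))) (fun x hx => by
    rw [gammaPDFReal, if_pos (le_of_lt hx), Real.one_rpow]
    rw [mul_assoc, mul_assoc, ← Real.exp_add]
    ring_nf)]
  rw [integral_const_mul, integral_rpow_mul_exp_neg_mul_Ioi hf₂ h1u]
  rw [Real.rpow_neg h1u.le]
  rw [one_div, ← Real.inv_rpow h1u.le]
  field_simp

private lemma gamma_mean_ne_top (f₂ : ℝ) (hf₂ : 0 < f₂) :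
    ∫⁻ y, ENNReal.ofReal y ∂(gammaMeasure f₂ 1) ≠ ⊤ := by
  rw [gammaMeasure, show gammaPDF f₂ 1 = fun x => ENNReal.ofReal (gammaPDFReal f₂ 1 x) from rfl,
    lintegral_withDensity_eq_lintegral_mul _
    ((measurable_gammaPDFReal f₂ 1).ennreal_ofReal) ENNReal.measurable_ofReal]
  have heq : ∀ y : ℝ, ((fun x => ENNReal.ofReal (gammaPDFReal f₂ 1 x)) * fun y =>
      ENNReal.ofReal y) y = ENNReal.ofReal (gammaPDFReal f₂ 1 y * y) := by
    intro y
    rw [Pi.mul_apply, ← ENNReal.ofReal_mul (gammaPDFReal_nonneg hf₂ one_pos y)]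
  simp_rw [heq]
  -- the function is integrable
  have hind : (fun y : ℝ => gammaPDFReal f₂ 1 y * y)
      = Set.indicator (Ici (0:ℝ)) (fun y => (1 / Real.Gamma f₂) * (Real.exp (-y) * y ^ f₂)) := by
    funext y
    rcases le_or_gt 0 y with hy | hy
    · rw [Set.indicator_of_mem (Set.mem_Ici.mpr hy), gammaPDFReal, if_pos hy, Real.one_rpow]
      rcases eq_or_lt_of_le hy with rfl | hy0
      · simp [Real.zero_rpow hf₂.ne']
      · have hpow : y ^ f₂ = y ^ (f₂ - 1) * y := by
          rw [← Real.rpow_add_one hy0.ne']; norm_num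
        rw [hpow, one_mul]; ring
    · rw [Set.indicator_of_notMem (by simpa using hy), gammaPDFReal, if_neg (by linarith),
        zero_mul]
  have hint : Integrable (fun y : ℝ => gammaPDFReal f₂ 1 y * y) := by
    rw [hind, integrable_indicator_iff measurableSet_Ici]
    apply Integrable.const_mul
    have hio : IntegrableOn (fun x : ℝ => Real.exp (-x) * x ^ f₂) (Set.Ioi 0) := by
      have := Real.GammaIntegral_convergent (by linarith : (0:ℝ) < f₂ + 1)
      simpa using this
    exact Iff.mpr integrableOn_Ici_iff_integrableOn_Ioi hio
  exact hint.lintegral_lt_top.ne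


private lemma gamma_Iio_zero (f₂ : ℝ) : gammaMeasure f₂ 1 (Set.Iio 0) = 0 := by
  rw [gammaMeasure, withDensity_apply _ measurableSet_Iio]
  exact lintegral_gammaPDF_of_nonpos le_rfl

private lemma summable_half_sq : Summable (fun ℓ : ℕ => 1 / ((ℓ : ℝ) + 1 / 2) ^ 2) := by
  have h4 : Summable (fun ℓ : ℕ => 4 * (1 / ((ℓ : ℝ) + 1) ^ 2)) := by
    apply Summable.mul_left
    have := (summable_nat_add_iff (f := fun n : ℕ => 1 / (n : ℝ) ^ 2) 1).mpr
      (Real.summable_one_div_nat_pow.mpr one_lt_two)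
    exact this.congr fun n => by push_cast; ring
  refine Summable.of_nonneg_of_le (fun ℓ => by positivity) (fun ℓ => ?_) h4
  rw [div_le_iff₀ (by positivity)]
  rw [mul_comm (4:ℝ) _, mul_assoc, one_div, inv_mul_eq_div, le_div_iff₀ (by positivity)]
  nlinarith [(Nat.cast_nonneg ℓ : (0:ℝ) ≤ (ℓ:ℝ))]


/-- Polson's Pólya–Gamma integral identity: if `ω = (1/(2π²)) Σ_ℓ g_ℓ/(ℓ-1/2)²`
with `g_ℓ` i.i.d. `Gamma(f₂,1)`, then
`e^{f₁θ}/(1+e^θ)^{f₂} = 2^{-f₂} e^{κθ} 𝔼[e^{-ωθ²/2}]` with `κ = f₁ - f₂/2`;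
equivalently `𝔼[e^{-ωθ²/2}] = cosh(θ/2)^{-f₂}`. -/
theorem polson_polya_gamma_identity
    {Ω : Type*} [MeasurableSpace Ω] (μ : Measure Ω) [IsProbabilityMeasure μ]
    (f₁ f₂ θ : ℝ) (hf₂ : 0 < f₂)
    (g : ℕ → Ω → ℝ)
    (hindep : iIndepFun g μ)
    (hmeas : ∀ ℓ, Measurable (g ℓ))
    (hlaw : ∀ ℓ, μ.map (g ℓ) = gammaMeasure f₂ 1)
    (ω : Ω → ℝ)
    (hω : ∀ x, ω x = (1 / (2 * π ^ 2)) *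
      ∑' ℓ : ℕ, g ℓ x / ((ℓ : ℝ) + 1 / 2) ^ 2) :
    (∫ x, Real.exp (-(ω x) * θ ^ 2 / 2) ∂μ) = Real.cosh (θ / 2) ^ (-f₂) ∧
    Real.exp (f₁ * θ) / (1 + Real.exp θ) ^ f₂ =
      (2 : ℝ) ^ (-f₂) * Real.exp ((f₁ - f₂ / 2) * θ) *
        ∫ x, Real.exp (-(ω x) * θ ^ 2 / 2) ∂μ := by
  have hπ2 : (0 : ℝ) < π ^ 2 := by positivity
  set T : Ω → ℝ := fun x => ∑' ℓ : ℕ, g ℓ x / ((ℓ : ℝ) + 1 / 2) ^ 2 with hT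
  set t : ℝ := -(θ ^ 2 / (4 * π ^ 2)) with htdef
  have ht0 : t ≤ 0 := neg_nonpos.mpr (by positivity)
  have hinteq : ∀ x, Real.exp (-(ω x) * θ ^ 2 / 2) = Real.exp (t * T x) := by
    intro x
    rw [hω x]
    congr 1
    rw [hT, htdef]
    field_simp
    ring
  -- a.e. nonnegativity of all g ℓ
  have hgnn : ∀ᵐ x ∂μ, ∀ ℓ, 0 ≤ g ℓ x := by
    rw [ae_all_iff]
    intro ℓ
    have hm : μ (g ℓ ⁻¹' Set.Iio 0) = (μ.map (g ℓ)) (Set.Iio 0) :=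
      (Measure.map_apply (hmeas ℓ) measurableSet_Iio).symm
    rw [hlaw ℓ, gamma_Iio_zero f₂] at hm
    rw [ae_iff]
    convert hm using 2
    ext x
    simp [Set.mem_preimage, not_le]
  -- a.e. summability
  have hc : ∀ ℓ : ℕ, (0 : ℝ) < ((ℓ : ℝ) + 1 / 2) ^ 2 := fun ℓ => by positivity
  have hsum_ae : ∀ᵐ x ∂μ, Summable (fun ℓ : ℕ => g ℓ x / ((ℓ : ℝ) + 1 / 2) ^ 2) := by
    have hfin : ∫⁻ x, ∑' ℓ : ℕ, ENNReal.ofReal (g ℓ x / ((ℓ : ℝ) + 1 / 2) ^ 2) ∂μ ≠ ⊤ := by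
      rw [lintegral_tsum (fun ℓ => ((hmeas ℓ).div_const _).ennreal_ofReal.aemeasurable)]
      have hterm : ∀ ℓ : ℕ, ∫⁻ x, ENNReal.ofReal (g ℓ x / ((ℓ : ℝ) + 1 / 2) ^ 2) ∂μ
          = ENNReal.ofReal (1 / ((ℓ : ℝ) + 1 / 2) ^ 2) *
            ∫⁻ y, ENNReal.ofReal y ∂(gammaMeasure f₂ 1) := by
        intro ℓ
        have h1 : ∫⁻ x, ENNReal.ofReal (g ℓ x / ((ℓ : ℝ) + 1 / 2) ^ 2) ∂μ
            = ∫⁻ y, ENNReal.ofReal (y / ((ℓ : ℝ) + 1 / 2) ^ 2) ∂(μ.map (g ℓ)) := by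
          rw [lintegral_map (measurable_id'.div_const _).ennreal_ofReal (hmeas ℓ)]
        rw [h1, hlaw ℓ]
        have h2 : ∀ y : ℝ, ENNReal.ofReal (y / ((ℓ : ℝ) + 1 / 2) ^ 2)
            = ENNReal.ofReal (1 / ((ℓ : ℝ) + 1 / 2) ^ 2) * ENNReal.ofReal y := by
          intro y
          rw [← ENNReal.ofReal_mul (by positivity)]
          congr 1
          field_simp
        rw [show (fun y : ℝ => ENNReal.ofReal (y / ((ℓ : ℝ) + 1 / 2) ^ 2))
            = fun y => ENNReal.ofReal (1 / ((ℓ : ℝ) + 1 / 2) ^ 2) * ENNReal.ofReal y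
          from funext h2]
        rw [lintegral_const_mul _ ENNReal.measurable_ofReal]
      simp_rw [hterm]
      rw [ENNReal.tsum_mul_right]
      refine ENNReal.mul_ne_top ?_ (gamma_mean_ne_top f₂ hf₂)
      rw [← ENNReal.ofReal_tsum_of_nonneg (fun ℓ => by positivity) summable_half_sq]
      exact ENNReal.ofReal_ne_top
    have hmeastsum : Measurable fun x =>
        ∑' ℓ : ℕ, ENNReal.ofReal (g ℓ x / ((ℓ : ℝ) + 1 / 2) ^ 2) :=
      Measurable.ennreal_tsum fun ℓ => ((hmeas ℓ).div_const _).ennreal_ofReal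
    have hae := ae_lt_top hmeastsum hfin
    filter_upwards [hae, hgnn] with x hx hnn
    have hsum := ENNReal.summable_toReal hx.ne
    refine hsum.congr fun ℓ => ?_
    rw [ENNReal.toReal_ofReal (div_nonneg (hnn ℓ) (hc ℓ).le)]
  -- the scaled random variables
  set X : ℕ → Ω → ℝ := fun ℓ x => g ℓ x / ((ℓ : ℝ) + 1 / 2) ^ 2 with hX
  have hXmeas : ∀ ℓ, Measurable (X ℓ) := fun ℓ => (hmeas ℓ).div_const _
  have hXindep : iIndepFun X μ :=
    hindep.comp (fun ℓ y => y / ((ℓ : ℝ) + 1 / 2) ^ 2) fun ℓ => measurable_id.div_const _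
  -- mgf of each X ℓ
  have hmgfX : ∀ ℓ : ℕ, mgf (X ℓ) μ t
      = (1 + (θ / 2) ^ 2 / (((ℓ : ℝ) + 1 / 2) ^ 2 * π ^ 2)) ^ (-f₂) := by
    intro ℓ
    have h1 : mgf (X ℓ) μ t
        = ∫ y, Real.exp ((t / ((ℓ : ℝ) + 1 / 2) ^ 2) * y) ∂(μ.map (g ℓ)) := by
      rw [integral_map (hmeas ℓ).aemeasurable
        (Measurable.aestronglyMeasurable ((measurable_id'.const_mul _).exp))]
      simp only [mgf, hX]
      congr 1
      funext x
      congr 1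
      ring
    rw [h1, hlaw ℓ, gamma_laplace f₂ hf₂ (div_nonpos_of_nonpos_of_nonneg ht0 (hc ℓ).le)]
    congr 1
    rw [htdef]
    field_simp
    ring
  -- finite products
  have hprod : ∀ n : ℕ, mgf (∑ ℓ ∈ Finset.range n, X ℓ) μ t
      = (∏ ℓ ∈ Finset.range n,
          (1 + (θ / 2) ^ 2 / (((ℓ : ℝ) + 1 / 2) ^ 2 * π ^ 2))) ^ (-f₂) := by
    intro n
    rw [hXindep.mgf_sum hXmeas, Finset.prod_congr rfl (fun ℓ _ => hmgfX ℓ),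
      ← Real.finset_prod_rpow _ _ (fun ℓ _ => by positivity) (-f₂)]
  -- limit of the products
  have hcosh : Tendsto (fun n : ℕ => mgf (∑ ℓ ∈ Finset.range n, X ℓ) μ t) atTop
      (nhds (Real.cosh (θ / 2) ^ (-f₂))) := by
    simp_rw [hprod]
    exact (tendsto_cosh_prod (θ / 2)).rpow_const
      (Or.inl (Real.cosh_pos (θ / 2)).ne')
  -- dominated convergence
  have hdct : Tendsto (fun n : ℕ => mgf (∑ ℓ ∈ Finset.range n, X ℓ) μ t) atTop
      (nhds (∫ x, Real.exp (t * T x) ∂μ)) := by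
    have hFeq : ∀ n : ℕ, mgf (∑ ℓ ∈ Finset.range n, X ℓ) μ t
        = ∫ x, Real.exp (t * ∑ ℓ ∈ Finset.range n, X ℓ x) ∂μ := by
      intro n
      simp only [mgf, Finset.sum_apply]
    have hdct' := tendsto_integral_of_dominated_convergence (μ := μ)
      (F := fun (n : ℕ) (x : Ω) => Real.exp (t * ∑ ℓ ∈ Finset.range n, X ℓ x))
      (f := fun x => Real.exp (t * T x)) (fun _ => 1) ?_ (integrable_const 1) ?_ ?_
    · exact (hdct'.congr fun n => (hFeq n).symm)
    · intro n
      exact (((Finset.measurable_sum _ fun ℓ _ => hXmeas ℓ).const_mul t).exp).aestronglyMeasurable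
    · intro n
      filter_upwards [hgnn] with x hnn
      rw [Real.norm_eq_abs, Real.abs_exp]
      exact Real.exp_le_one_iff.mpr (mul_nonpos_of_nonpos_of_nonneg ht0
        (Finset.sum_nonneg fun ℓ _ => div_nonneg (hnn ℓ) (hc ℓ).le))
    · filter_upwards [hsum_ae] with x hx
      exact (Real.continuous_exp.tendsto _).comp (hx.hasSum.tendsto_sum_nat.const_mul t)
  have hmain : (∫ x, Real.exp (t * T x) ∂μ) = Real.cosh (θ / 2) ^ (-f₂) :=
    tendsto_nhds_unique hdct hcosh
  have hfirst : (∫ x, Real.exp (-(ω x) * θ ^ 2 / 2) ∂μ) = Real.cosh (θ / 2) ^ (-f₂) := by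
    rw [← hmain]
    exact integral_congr_ae (Filter.Eventually.of_forall fun x => hinteq x)
  refine ⟨hfirst, ?_⟩
  rw [hfirst]
  -- algebraic identity
  have hcoshpos : (0 : ℝ) < Real.cosh (θ / 2) := Real.cosh_pos (θ / 2)
  have he : Real.exp (θ / 2) * Real.exp (θ / 2) = Real.exp θ := by
    rw [← Real.exp_add]; norm_num
  have h2 : Real.exp (θ / 2) * Real.exp (-(θ / 2)) = 1 := by
    rw [← Real.exp_add]; simp
  have h1e : (1 : ℝ) + Real.exp θ = 2 * Real.exp (θ / 2) * Real.cosh (θ / 2) := by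
    rw [Real.cosh_eq]
    linear_combination -he - h2
  rw [h1e, Real.mul_rpow (by positivity) hcoshpos.le,
    Real.mul_rpow (by norm_num) (Real.exp_pos _).le, ← Real.exp_mul,
    Real.rpow_neg (by norm_num : (0:ℝ) ≤ 2), Real.rpow_neg hcoshpos.le,
    show (f₁ - f₂ / 2) * θ = f₁ * θ - θ / 2 * f₂ by ring, Real.exp_sub]
  rw [div_eq_iff (by positivity)]
  field_simp
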